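/- Let A be a unital C*-algebra, let e ∈ A be a partial isometry (i.e. e e* e = e), and let x be an element of the closed unit ball of A. Then ‖e e* x (1 − e* e) + (1 − e e*) x e* e‖ ≤ 4 · √(‖e − e e* x e* e‖). (This is the C*-algebra instance of the quantitative Peirce inequality ‖P₁(e)(x)‖ ≤ 4√(‖e − P₂(e)(x)‖) for tripotents in JB*-triples, since in a C*-algebra P₂(e)(x) = e e* x e* e and P₁(e)(x) = e e* x (1 − e* e) + (1 − e e*) x e* e.) -/

import Mathlib

/-- quantitative Peirce inequality in a unital C*-algebra:
if `e` is a partial isometry and `‖x‖ ≤ 1`, then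
`‖e e* x (1 - e* e) + (1 - e e*) x e* e‖ ≤ 4 √(‖e - e e* x e* e‖)`. -/
theorem norm_peirce_one_le
    {A : Type*} [NormedRing A] [StarRing A] [CStarRing A] [CompleteSpace A]
    [NormedAlgebra ℂ A] [StarModule ℂ A]
    (e : A) (he : e * star e * e = e) (x : A) (hx : ‖x‖ ≤ 1) :
    ‖e * star e * x * (1 - star e * e) + (1 - e * star e) * x * (star e * e)‖ ≤
      4 * Real.sqrt ‖e - e * star e * x * (star e * e)‖ := by
  letI : CStarAlgebra A := { }
  letI := CStarAlgebra.spectralOrder A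
  letI := CStarAlgebra.spectralOrderedRing A
  -- basic identities, established before abbreviating
  have hqq : (star e * e) * (star e * e) = star e * e := by
    rw [show star e * e * (star e * e) = star e * (e * star e * e) by noncomm_ring, he]
  have hpp : (e * star e) * (e * star e) = e * star e := by
    rw [show e * star e * (e * star e) = (e * star e * e) * star e by noncomm_ring, he]
  have hstarp : star (e * star e) = e * star e := by simp [star_mul]
  have hstarq : star (star e * e) = star e * e := by simp [star_mul]
  have hqnorm : ‖star e * e‖ ≤ 1 := by
    have h1 : ‖star e * e‖ * ‖star e * e‖ = ‖star e * e‖ := by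
      conv_lhs => rw [← CStarRing.norm_star_mul_self (x := star e * e)]
      rw [hstarq, hqq]
    nlinarith [norm_nonneg (star e * e)]
  have henorm : ‖e‖ ≤ 1 := by
    have h2 : ‖e‖ * ‖e‖ = ‖star e * e‖ := CStarRing.norm_star_mul_self.symm
    nlinarith [norm_nonneg e, norm_nonneg (star e * e)]
  set p : A := e * star e with hp
  set q : A := star e * e with hq
  set t : A := e - p * x * q with ht
  set δ : ℝ := ‖t‖ with hδ
  have hδ0 : (0:ℝ) ≤ δ := norm_nonneg _
  have hpxq : p * x * q = e - t := by rw [ht]; abel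
  have hxx1 : x * star x ≤ 1 := by
    refine (CStarAlgebra.norm_le_one_iff_of_nonneg _ (mul_star_self_nonneg x)).mp ?_
    rw [CStarRing.norm_self_mul_star]; nlinarith [norm_nonneg x]
  have hxx2 : star x * x ≤ 1 := by
    refine (CStarAlgebra.norm_le_one_iff_of_nonneg _ (star_mul_self_nonneg x)).mp ?_
    rw [CStarRing.norm_star_mul_self]; nlinarith [norm_nonneg x]
  set a : A := p * x * (1 - q) with ha
  set b : A := (1 - p) * x * q with hb
  have hsa : star a = (1 - q) * (star x * p) := by
    rw [ha]
    simp only [star_mul, star_sub, star_one, hstarp, hstarq, mul_assoc]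
  have hsb : star b = q * (star x * (1 - p)) := by
    rw [hb]
    simp only [star_mul, star_sub, star_one, hstarp, hstarq, mul_assoc]
  have hspxq : star (p * x * q) = q * (star x * p) := by
    simp only [star_mul, hstarp, hstarq, mul_assoc]
  -- identity for a * star a
  have hA : a * star a = p * (x * star x) * p - (p * x * q) * star (p * x * q) := by
    rw [hsa, hspxq, ha, ← sub_eq_zero]
    rw [show p * x * (1 - q) * ((1 - q) * (star x * p)) -
        (p * (x * star x) * p - p * x * q * (q * (star x * p))) =
        p * (x * ((q * q - q) * (star x * p))) + p * (x * ((q * q - q) * (star x * p))) by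
      noncomm_ring]
    simp only [hqq, sub_self, zero_mul, mul_zero, add_zero]
  have hB : star b * b = q * (star x * x) * q - star (p * x * q) * (p * x * q) := by
    rw [hsb, hspxq, hb, ← sub_eq_zero]
    rw [show q * (star x * (1 - p)) * ((1 - p) * x * q) -
        (q * (star x * x) * q - q * (star x * p) * (p * x * q)) =
        q * (star x * ((p * p - p) * (x * q))) + q * (star x * ((p * p - p) * (x * q))) by
      noncomm_ring]
    simp only [hpp, sub_self, zero_mul, mul_zero, add_zero]
  -- conjugation bounds
  have hconjA : p * (x * star x) * p ≤ p := by
    have h := star_right_conjugate_le_conjugate hxx1 p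
    rwa [hstarp, mul_one, hpp] at h
  have hconjB : q * (star x * x) * q ≤ q := by
    have h := star_right_conjugate_le_conjugate hxx2 q
    rwa [hstarq, mul_one, hqq] at h
  have htstar : star t = star e - q * (star x * p) := by
    rw [ht, star_sub, hspxq]
  have hAle : a * star a ≤ e * star t + t * star e := by
    have h1 : a * star a ≤ p - (p * x * q) * star (p * x * q) := by
      rw [hA]; exact sub_le_sub_right hconjA _
    have h2 : p - (p * x * q) * star (p * x * q) =
        e * star t + t * star e - t * star t := by
      rw [hspxq, htstar, ht, hp]
      noncomm_ring
    rw [h2] at h1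
    calc a * star a ≤ e * star t + t * star e - t * star t := h1
      _ ≤ e * star t + t * star e := sub_le_self _ (mul_star_self_nonneg t)
  have hBle : star b * b ≤ star e * t + star t * e := by
    have h1 : star b * b ≤ q - star (p * x * q) * (p * x * q) := by
      rw [hB]; exact sub_le_sub_right hconjB _
    have h2 : q - star (p * x * q) * (p * x * q) =
        star e * t + star t * e - star t * t := by
      rw [hspxq, htstar, ht, hq]
      noncomm_ring
    rw [h2] at h1
    calc star b * b ≤ star e * t + star t * e - star t * t := h1
      _ ≤ star e * t + star t * e := sub_le_self _ (star_mul_self_nonneg t)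
  -- norm bounds
  have hnormA : ‖a‖ ^ 2 ≤ 2 * δ := by
    have h1 : ‖a * star a‖ ≤ ‖e * star t + t * star e‖ :=
      CStarAlgebra.norm_le_norm_of_nonneg_of_le (mul_star_self_nonneg a) hAle
    have h2 : ‖e * star t + t * star e‖ ≤ 2 * δ := by
      calc ‖e * star t + t * star e‖ ≤ ‖e * star t‖ + ‖t * star e‖ := norm_add_le _ _
        _ ≤ ‖e‖ * ‖star t‖ + ‖t‖ * ‖star e‖ := add_le_add (norm_mul_le _ _) (norm_mul_le _ _)
        _ ≤ 2 * δ := by rw [norm_star, norm_star]; nlinarith [norm_nonneg t]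
    calc ‖a‖ ^ 2 = ‖a * star a‖ := by rw [CStarRing.norm_self_mul_star, sq]
      _ ≤ 2 * δ := h1.trans h2
  have hnormB : ‖b‖ ^ 2 ≤ 2 * δ := by
    have h1 : ‖star b * b‖ ≤ ‖star e * t + star t * e‖ :=
      CStarAlgebra.norm_le_norm_of_nonneg_of_le (star_mul_self_nonneg b) hBle
    have h2 : ‖star e * t + star t * e‖ ≤ 2 * δ := by
      calc ‖star e * t + star t * e‖ ≤ ‖star e * t‖ + ‖star t * e‖ := norm_add_le _ _
        _ ≤ ‖star e‖ * ‖t‖ + ‖star t‖ * ‖e‖ := add_le_add (norm_mul_le _ _) (norm_mul_le _ _)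
        _ ≤ 2 * δ := by rw [norm_star, norm_star]; nlinarith [norm_nonneg t]
    calc ‖b‖ ^ 2 = ‖star b * b‖ := by rw [CStarRing.norm_star_mul_self, sq]
      _ ≤ 2 * δ := h1.trans h2
  have hsqrtA : ‖a‖ ≤ Real.sqrt (2 * δ) :=
    (Real.le_sqrt (norm_nonneg a) (by positivity)).mpr hnormA
  have hsqrtB : ‖b‖ ≤ Real.sqrt (2 * δ) :=
    (Real.le_sqrt (norm_nonneg b) (by positivity)).mpr hnormB
  calc ‖a + b‖ ≤ ‖a‖ + ‖b‖ := norm_add_le _ _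
    _ ≤ 2 * Real.sqrt (2 * δ) := by linarith
    _ = 2 * (Real.sqrt 2 * Real.sqrt δ) := by rw [Real.sqrt_mul (by norm_num) δ]
    _ ≤ 4 * Real.sqrt δ := by
        nlinarith [Real.sqrt_nonneg δ, Real.sqrt_nonneg 2,
          Real.sq_sqrt (show (0:ℝ) ≤ 2 by norm_num)]
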